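/- Define on Ap(M,Q) the operation w ⊕ w' = the unique element w'' of Ap(M,Q) such that w + w' ∈ w'' + ⟨Q⟩, where Q = {(c/gcd(a,c),0), (0,c/gcd(b,c))}. Then (Ap(M,Q), ⊕) is an abelian group isomorphic to ℤ/(c/(gcd(a,c)gcd(b,c)))ℤ. -/

import Mathlib

/-- The Apéry set of `M = {(x,y) ∈ ℕ² : c ∣ ax + by}` with respect to
`Q = {(c/gcd(a,c),0), (0,c/gcd(b,c))}`, endowed with the operation `w ⊕ w' :=` the unique
`w'' ∈ Ap(M,Q)` with `w + w' ∈ w'' + ⟨Q⟩`, is an abelian group isomorphic to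
`ℤ/(c/(gcd(a,c)gcd(b,c)))ℤ`.  This is expressed by a bijection `e` from the Apéry set to
`ZMod (c/(gcd(a,c)gcd(b,c)))` transporting `⊕` to addition. -/
theorem stmt_18 (a b c : ℕ) (hc : 0 < c) (ha : 1 ≤ a) (ha' : a < c) (hb : 1 ≤ b) (hb' : b < c)
    (hgcd : Nat.gcd a (Nat.gcd b c) = 1)
    (M : Set (ℕ × ℕ)) (hM : M = {p | c ∣ a * p.1 + b * p.2})
    (q₁ q₂ : ℕ × ℕ) (hq₁ : q₁ = (c / Nat.gcd a c, 0)) (hq₂ : q₂ = (0, c / Nat.gcd b c))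
    (Ap : Set (ℕ × ℕ))
    (hAp : Ap = {m | m ∈ M ∧ ∀ q ∈ ({q₁, q₂} : Set (ℕ × ℕ)), ¬ ∃ y ∈ M, m = q + y}) :
    ∃ e : Ap ≃ ZMod (c / (Nat.gcd a c * Nat.gcd b c)),
      ∀ w w' w'' : Ap,
        (∃ f ∈ AddSubmonoid.closure ({q₁, q₂} : Set (ℕ × ℕ)),
          (w : ℕ × ℕ) + (w' : ℕ × ℕ) = (w'' : ℕ × ℕ) + f) →
        e w'' = e w + e w' := by
  set d₁ := Nat.gcd a c with hd₁def
  set d₂ := Nat.gcd b c with hd₂def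
  have hd₁a : d₁ ∣ a := Nat.gcd_dvd_left a c
  have hd₁c : d₁ ∣ c := Nat.gcd_dvd_right a c
  have hd₂b : d₂ ∣ b := Nat.gcd_dvd_left b c
  have hd₂c : d₂ ∣ c := Nat.gcd_dvd_right b c
  have hd₁pos : 0 < d₁ := Nat.gcd_pos_of_pos_right a hc
  have hd₂pos : 0 < d₂ := Nat.gcd_pos_of_pos_right b hc
  have had₂ : Nat.Coprime a d₂ := hgcd
  have hd₁d₂ : Nat.Coprime d₁ d₂ := Nat.Coprime.coprime_dvd_left hd₁a had₂
  have hdd : d₁ * d₂ ∣ c := Nat.Coprime.mul_dvd_of_dvd_of_dvd hd₁d₂ hd₁c hd₂c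
  set n := c / (d₁ * d₂) with hndef
  have hnpos : 0 < n := Nat.div_pos (Nat.le_of_dvd hc hdd) (by positivity)
  have hd₂cd₁ : d₂ ∣ c / d₁ := (Nat.dvd_div_iff_mul_dvd hd₁c).mpr hdd
  have hcd₁ : c / d₁ = d₂ * n := by
    rw [hndef, ← Nat.div_div_eq_div_mul, Nat.mul_div_cancel' hd₂cd₁]
  have hcd₂pos : 0 < c / d₂ := Nat.div_pos (Nat.le_of_dvd hc hd₂c) hd₂pos
  haveI : NeZero n := ⟨hnpos.ne'⟩
  haveI : NeZero (c / d₂) := ⟨hcd₂pos.ne'⟩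
  have hbb : b = d₂ * (b / d₂) := (Nat.mul_div_cancel' hd₂b).symm
  have hcc : c = d₂ * (c / d₂) := (Nat.mul_div_cancel' hd₂c).symm
  have cop : Nat.Coprime (b / d₂) (c / d₂) := Nat.coprime_div_gcd_div_gcd hd₂pos
  have hq1M : c ∣ a * (c / d₁) := by
    have h := Nat.mul_dvd_mul_right hd₁a (c / d₁)
    rwa [Nat.mul_div_cancel' hd₁c] at h
  have hq2M : c ∣ b * (c / d₂) := by
    have h := Nat.mul_dvd_mul_right hd₂b (c / d₂)
    rwa [Nat.mul_div_cancel' hd₂c] at h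
  -- characterization of Ap
  have hApc : ∀ m : ℕ × ℕ, m ∈ Ap ↔
      (c ∣ a * m.1 + b * m.2 ∧ m.1 < c / d₁ ∧ m.2 < c / d₂) := by
    intro m
    rw [hAp]
    simp only [Set.mem_setOf_eq, hM, Set.mem_insert_iff, Set.mem_singleton_iff]
    constructor
    · rintro ⟨hm, hq⟩
      refine ⟨hm, ?_, ?_⟩
      · by_contra h
        push_neg at h
        refine hq q₁ (Or.inl rfl) ⟨(m.1 - c / d₁, m.2), ?_, ?_⟩
        · have h1 : a * (m.1 - c / d₁) = a * m.1 - a * (c / d₁) := Nat.mul_sub a _ _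
          have h2 : a * (c / d₁) ≤ a * m.1 := Nat.mul_le_mul_left a h
          have h3 : a * (m.1 - c / d₁) + b * m.2 = (a * m.1 + b * m.2) - a * (c / d₁) := by
            omega
          show c ∣ a * (m.1 - c / d₁) + b * m.2
          rw [h3]
          exact Nat.dvd_sub hm hq1M
        · rw [hq₁, Prod.mk_add_mk]
          exact Prod.ext (by simp; omega) (by simp)
      · by_contra h
        push_neg at h
        refine hq q₂ (Or.inr rfl) ⟨(m.1, m.2 - c / d₂), ?_, ?_⟩
        · have h1 : b * (m.2 - c / d₂) = b * m.2 - b * (c / d₂) := Nat.mul_sub b _ _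
          have h2 : b * (c / d₂) ≤ b * m.2 := Nat.mul_le_mul_left b h
          have h3 : a * m.1 + b * (m.2 - c / d₂) = (a * m.1 + b * m.2) - b * (c / d₂) := by
            omega
          show c ∣ a * m.1 + b * (m.2 - c / d₂)
          rw [h3]
          exact Nat.dvd_sub hm hq2M
        · rw [hq₂, Prod.mk_add_mk]
          exact Prod.ext (by simp) (by simp; omega)
    · rintro ⟨hm, h1, h2⟩
      refine ⟨hm, ?_⟩
      rintro q (rfl | rfl) ⟨y, hy, heq⟩
      · have := congrArg Prod.fst heq
        rw [hq₁] at this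
        simp at this
        omega
      · have := congrArg Prod.snd heq
        rw [hq₂] at this
        simp at this
        omega
  -- d₂ divides first coordinates of elements of M
  have hdvdx : ∀ m : ℕ × ℕ, c ∣ a * m.1 + b * m.2 → d₂ ∣ m.1 := by
    intro m hm
    have h1 : d₂ ∣ a * m.1 + b * m.2 := dvd_trans hd₂c hm
    have h2 : d₂ ∣ b * m.2 := Dvd.dvd.mul_right hd₂b m.2
    have h3 : d₂ ∣ a * m.1 := (Nat.dvd_add_right h2).mp (by rwa [add_comm] at h1)
    exact (Nat.Coprime.symm had₂).dvd_of_dvd_mul_left h3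
  -- uniqueness of second coordinate
  have key2 : ∀ s y y' : ℕ, y < c / d₂ → y' < c / d₂ →
      c ∣ b * y + s → c ∣ b * y' + s → y = y' := by
    intro s y y' hy hy' h h'
    have main : ∀ z z' : ℕ, z ≤ z' → z' < c / d₂ →
        c ∣ b * z + s → c ∣ b * z' + s → z = z' := by
      intro z z' hle hz' hz hz''
      have hsub : c ∣ b * (z' - z) := by
        have := Nat.dvd_sub hz'' hz
        have he : (b * z' + s) - (b * z + s) = b * (z' - z) := by
          have := Nat.mul_sub b z' z
          have h2 : b * z ≤ b * z' := Nat.mul_le_mul_left b hle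
          omega
        rwa [he] at this
      have hstep : c / d₂ ∣ (b / d₂) * (z' - z) := by
        have hdvd : d₂ * (c / d₂) ∣ d₂ * ((b / d₂) * (z' - z)) := by
          rw [← hcc, ← mul_assoc, ← hbb]; exact hsub
        exact (mul_dvd_mul_iff_left hd₂pos.ne').mp hdvd
      have hfin : c / d₂ ∣ z' - z := (Nat.Coprime.symm cop).dvd_of_dvd_mul_left hstep
      rcases Nat.lt_or_ge z z' with hlt | hge
      · have := Nat.le_of_dvd (by omega) hfin
        omega
      · omega
    rcases le_total y y' with hle | hle
    · exact main y y' hle hy' h h'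
    · exact (main y' y hle hy h' h).symm
  -- the map
  set E : Ap → ZMod n := fun m => (((m : ℕ × ℕ).1 / d₂ : ℕ) : ZMod n) with hEdef
  have hElt : ∀ m : Ap, (m : ℕ × ℕ).1 / d₂ < n := by
    intro m
    have h := ((hApc m).mp m.2).2.1
    rw [hcd₁] at h
    exact Nat.div_lt_of_lt_mul h
  have hinj : Function.Injective E := by
    intro m m' h
    have hm := (hApc m).mp m.2
    have hm' := (hApc m').mp m'.2
    have hdm : d₂ ∣ (m : ℕ × ℕ).1 := hdvdx _ hm.1
    have hdm' : d₂ ∣ (m' : ℕ × ℕ).1 := hdvdx _ hm'.1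
    have h' : (m : ℕ × ℕ).1 / d₂ = (m' : ℕ × ℕ).1 / d₂ := by
      have h2 := congrArg ZMod.val h
      rwa [hEdef, ZMod.val_cast_of_lt (hElt m), ZMod.val_cast_of_lt (hElt m')] at h2
    have hx : (m : ℕ × ℕ).1 = (m' : ℕ × ℕ).1 := by
      rw [← Nat.div_mul_cancel hdm, ← Nat.div_mul_cancel hdm', h']
    have hy : (m : ℕ × ℕ).2 = (m' : ℕ × ℕ).2 := by
      refine key2 (a * (m' : ℕ × ℕ).1) _ _ hm.2.2 hm'.2.2 ?_ ?_
      · rw [add_comm, ← hx]; exact hm.1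
      · rw [add_comm]; exact hm'.1
    exact Subtype.ext (Prod.ext hx hy)
  have hsurj : Function.Surjective E := by
    intro t
    set u : (ZMod (c / d₂))ˣ := ZMod.unitOfCoprime (b / d₂) cop with hu
    set z : ZMod (c / d₂) := (↑u⁻¹ : ZMod (c / d₂)) * (-(((a * t.val : ℕ)) : ZMod (c / d₂))) with hz
    set y := z.val with hydef
    have hylt : y < c / d₂ := ZMod.val_lt z
    have hdvd : c / d₂ ∣ a * t.val + (b / d₂) * y := by
      refine (ZMod.natCast_eq_zero_iff _ _).mp ?_
      push_cast
      have hyz : ((y : ℕ) : ZMod (c / d₂)) = z := ZMod.natCast_rightInverse z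
      rw [hyz, hz]
      have hub : ((b / d₂ : ℕ) : ZMod (c / d₂)) = ↑u := (ZMod.coe_unitOfCoprime _ _).symm
      rw [hub, ← mul_assoc, Units.mul_inv, one_mul]
      push_cast
      ring
    have hmem : (d₂ * t.val, y) ∈ Ap := by
      refine (hApc _).mpr ⟨?_, ?_, hylt⟩
      · have : a * (d₂ * t.val) + b * y = d₂ * (a * t.val + (b / d₂) * y) := by
          calc a * (d₂ * t.val) + b * y
              = a * (d₂ * t.val) + (d₂ * (b / d₂)) * y := by rw [← hbb]
            _ = d₂ * (a * t.val + (b / d₂) * y) := by ring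
        rw [this, hcc]
        exact mul_dvd_mul_left d₂ hdvd
      · rw [hcd₁]
        exact mul_lt_mul_of_pos_left (ZMod.val_lt t) hd₂pos
    refine ⟨⟨(d₂ * t.val, y), hmem⟩, ?_⟩
    show (((d₂ * t.val) / d₂ : ℕ) : ZMod n) = t
    rw [Nat.mul_div_cancel_left _ hd₂pos]
    exact ZMod.natCast_rightInverse t
  -- divisibility of first coordinates of closure elements
  have hf1 : ∀ p ∈ AddSubmonoid.closure ({q₁, q₂} : Set (ℕ × ℕ)), (c / d₁) ∣ p.1 := by
    intro p hp
    induction hp using AddSubmonoid.closure_induction with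
    | mem q hq =>
      rcases hq with rfl | rfl
      · rw [hq₁]
      · rw [hq₂]; exact dvd_zero _
    | zero => exact dvd_zero _
    | add x y _ _ hx hy => exact (Prod.fst_add x y) ▸ dvd_add hx hy
  refine ⟨Equiv.ofBijective E ⟨hinj, hsurj⟩, ?_⟩
  rintro w w' w'' ⟨f, hf, hsum⟩
  obtain ⟨k, hk⟩ := hf1 f hf
  rw [hcd₁] at hk
  have hcomp : (w : ℕ × ℕ).1 + (w' : ℕ × ℕ).1 = (w'' : ℕ × ℕ).1 + f.1 :=
    congrArg Prod.fst hsum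
  have dA : d₂ ∣ (w : ℕ × ℕ).1 := hdvdx _ ((hApc w).mp w.2).1
  have dB : d₂ ∣ (w' : ℕ × ℕ).1 := hdvdx _ ((hApc w').mp w'.2).1
  have dC : d₂ ∣ (w'' : ℕ × ℕ).1 := hdvdx _ ((hApc w'').mp w''.2).1
  have heq : (w : ℕ × ℕ).1 / d₂ + (w' : ℕ × ℕ).1 / d₂
      = (w'' : ℕ × ℕ).1 / d₂ + n * k := by
    have h1 : d₂ * ((w : ℕ × ℕ).1 / d₂ + (w' : ℕ × ℕ).1 / d₂)
        = d₂ * ((w'' : ℕ × ℕ).1 / d₂ + n * k) := by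
      rw [mul_add, mul_add, Nat.mul_div_cancel' dA, Nat.mul_div_cancel' dB,
        Nat.mul_div_cancel' dC, ← mul_assoc]
      rw [hcomp, hk]
    exact Nat.eq_of_mul_eq_mul_left hd₂pos h1
  have hcast := congrArg (Nat.cast : ℕ → ZMod n) heq
  push_cast at hcast
  rw [ZMod.natCast_self, zero_mul, add_zero] at hcast
  show E w'' = E w + E w'
  rw [hEdef]
  exact hcast.symm
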